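/- arXiv:1910.09093 — 2 statements merged into one kernel-verified Lean document; each statement's English description precedes it below -/
import Mathlib

section
/- Let S and 𝒜 be measurable spaces, ν a probability measure on S, and κ a Markov kernel from S to 𝒜. Let f : S × 𝒜 → ℝ^d be measurable and square-integrable with respect to the joint measure ν ⊗ κ, let F(s) = ∫ f(s,a) dκ(s)(a), and let g ∈ ℝ^d be fixed. Then for any N ≥ 1, drawing s ~ ν and then a₁, …, a_N i.i.d. from κ(s): E[ ‖ (1/N) Σ_{k=1}^N f(s, a_k) − g ‖² ] = ∫_S ‖F(s) − g‖² dν(s) + (1/N) ∫_S ∫_𝒜 ‖f(s,a) − F(s)‖² dκ(s)(a) dν(s). In particular the within-state variance contribution decreases as 1/N. -/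
open MeasureTheory ProbabilityTheory

set_option maxHeartbeats 1000000
set_option linter.unusedSectionVars false
set_option linter.unnecessarySimpa false

private lemma abs_coord_le {d : ℕ} (x : EuclideanSpace ℝ (Fin d)) (i : Fin d) :
    |x i| ≤ ‖x‖ := by
  rw [EuclideanSpace.norm_eq]
  calc |x i| = Real.sqrt (‖x i‖ ^ 2) := by
        rw [Real.sqrt_sq_eq_abs, Real.norm_eq_abs, abs_abs]
    _ ≤ Real.sqrt (∑ j, ‖x j‖ ^ 2) := by
        apply Real.sqrt_le_sqrt
        exact Finset.single_le_sum (f := fun j => ‖x j‖ ^ 2) (fun j _ => by positivity)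
          (Finset.mem_univ i)

section Helpers

variable {𝒜 : Type*} [MeasurableSpace 𝒜] {μ : Measure 𝒜} [IsProbabilityMeasure μ] {N : ℕ}

private lemma aux_single_eq_prod (u : 𝒜 → ℝ) (k : Fin N) (x : Fin N → 𝒜) :
    u (x k) = ∏ i, (if i = k then u (x i) else 1) := by
  rw [Finset.prod_ite_eq' Finset.univ k (fun i => u (x i))]
  simp

private lemma aux_integrable_single (u : 𝒜 → ℝ) (hu : Integrable u μ) (k : Fin N) :
    Integrable (fun x : Fin N → 𝒜 => u (x k)) (Measure.pi fun _ => μ) := by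
  letI : MeasureSpace 𝒜 := ⟨μ⟩
  haveI : IsProbabilityMeasure (volume : Measure 𝒜) := ‹_›
  have H : Integrable
      (fun x : Fin N → 𝒜 => ∏ i, (fun i a => if i = k then u a else (1 : ℝ)) i (x i)) :=
    Integrable.fintype_prod (f := fun i a => if i = k then u a else (1 : ℝ)) (fun i => by
      by_cases h : i = k
      · simpa [h] using (show Integrable u (volume : Measure 𝒜) from hu)
      · simp [h])
  have hvol : (volume : Measure (Fin N → 𝒜)) = Measure.pi fun _ => μ := volume_pi
  rw [← hvol]
  exact H.congr (Filter.Eventually.of_forall fun x => by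
    simpa using (aux_single_eq_prod u k x).symm)

private lemma aux_integral_single (u : 𝒜 → ℝ) (k : Fin N) :
    ∫ x : Fin N → 𝒜, u (x k) ∂(Measure.pi fun _ => μ) = ∫ a, u a ∂μ := by
  letI : MeasureSpace 𝒜 := ⟨μ⟩
  haveI : IsProbabilityMeasure (volume : Measure 𝒜) := ‹_›
  have hvol : (Measure.pi fun _ : Fin N => μ) = (volume : Measure (Fin N → 𝒜)) := volume_pi.symm
  rw [hvol]
  calc ∫ x : Fin N → 𝒜, u (x k)
      = ∫ x : Fin N → 𝒜, ∏ i, (fun i a => if i = k then u a else (1 : ℝ)) i (x i) :=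
        integral_congr_ae (Filter.Eventually.of_forall fun x => by
          simpa using aux_single_eq_prod u k x)
    _ = ∏ i, ∫ a, (fun i a => if i = k then u a else (1 : ℝ)) i a :=
        integral_fintype_prod_volume_eq_prod (fun i a => if i = k then u a else (1 : ℝ))
    _ = ∫ a, u a ∂μ := by
        have h1 : ∀ i : Fin N,
            (∫ a, (fun i a => if i = k then u a else (1 : ℝ)) i a)
              = if i = k then ∫ a, u a ∂μ else 1 := by
          intro i
          by_cases h : i = k
          · subst h; simp only [if_true]; rfl
          · simp [h]
        rw [Finset.prod_congr rfl (fun i _ => h1 i),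
          Finset.prod_ite_eq' Finset.univ k (fun _ => ∫ a, u a ∂μ)]
        simp

private lemma aux_pair_eq_prod (u v : 𝒜 → ℝ) {j k : Fin N} (x : Fin N → 𝒜) :
    u (x j) * v (x k)
      = ∏ i, ((if i = j then u (x i) else 1) * (if i = k then v (x i) else 1)) := by
  rw [Finset.prod_mul_distrib, Finset.prod_ite_eq' Finset.univ j (fun i => u (x i)),
    Finset.prod_ite_eq' Finset.univ k (fun i => v (x i))]
  simp

private lemma aux_integrable_pair {u v : 𝒜 → ℝ} (hu : Integrable u μ) (hv : Integrable v μ)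
    {j k : Fin N} (hjk : j ≠ k) :
    Integrable (fun x : Fin N → 𝒜 => u (x j) * v (x k)) (Measure.pi fun _ => μ) := by
  letI : MeasureSpace 𝒜 := ⟨μ⟩
  haveI : IsProbabilityMeasure (volume : Measure 𝒜) := ‹_›
  have H : Integrable (fun x : Fin N → 𝒜 =>
      ∏ i, (fun i a => (if i = j then u a else (1 : ℝ)) * (if i = k then v a else 1)) i (x i)) :=
    Integrable.fintype_prod
      (f := fun i a => (if i = j then u a else (1 : ℝ)) * (if i = k then v a else 1)) (fun i => by
      by_cases h1 : i = j
      · subst h1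
        simpa [hjk] using (show Integrable u (volume : Measure 𝒜) from hu)
      · by_cases h2 : i = k
        · subst h2
          simpa [h1, Ne.symm hjk] using (show Integrable v (volume : Measure 𝒜) from hv)
        · simp [h1, h2])
  have hvol : (volume : Measure (Fin N → 𝒜)) = Measure.pi fun _ => μ := volume_pi
  rw [← hvol]
  exact H.congr (Filter.Eventually.of_forall fun x => by
    simpa using (aux_pair_eq_prod u v x).symm)

private lemma aux_integral_pair (u v : 𝒜 → ℝ) {j k : Fin N} (hjk : j ≠ k) :
    ∫ x : Fin N → 𝒜, u (x j) * v (x k) ∂(Measure.pi fun _ => μ)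
      = (∫ a, u a ∂μ) * ∫ a, v a ∂μ := by
  letI : MeasureSpace 𝒜 := ⟨μ⟩
  haveI : IsProbabilityMeasure (volume : Measure 𝒜) := ‹_›
  have hvol : (Measure.pi fun _ : Fin N => μ) = (volume : Measure (Fin N → 𝒜)) := volume_pi.symm
  rw [hvol]
  calc ∫ x : Fin N → 𝒜, u (x j) * v (x k)
      = ∫ x : Fin N → 𝒜,
          ∏ i, (fun i a => (if i = j then u a else (1 : ℝ)) * (if i = k then v a else 1)) i (x i) :=
        integral_congr_ae (Filter.Eventually.of_forall fun x => by
          simpa using aux_pair_eq_prod u v x)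
    _ = ∏ i, ∫ a, (fun i a => (if i = j then u a else (1 : ℝ)) * (if i = k then v a else 1)) i a :=
        integral_fintype_prod_volume_eq_prod
          (fun i a => (if i = j then u a else (1 : ℝ)) * (if i = k then v a else 1))
    _ = (∫ a, u a ∂μ) * ∫ a, v a ∂μ := by
        have h1 : ∀ i : Fin N,
            (∫ a, (fun i a => (if i = j then u a else (1 : ℝ)) * (if i = k then v a else 1)) i a)
              = (if i = j then ∫ a, u a ∂μ else 1) * (if i = k then ∫ a, v a ∂μ else 1) := by
          intro i
          by_cases h1 : i = j
          · subst h1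
            simp only [if_true, hjk, if_false, mul_one]
            rfl
          · by_cases h2 : i = k
            · subst h2
              simp only [h1, if_false, if_true, one_mul, Ne.symm hjk]
              rfl
            · simp [h1, h2]
        rw [Finset.prod_congr rfl (fun i _ => h1 i), Finset.prod_mul_distrib,
          Finset.prod_ite_eq' Finset.univ j (fun _ => ∫ a, u a ∂μ),
          Finset.prod_ite_eq' Finset.univ k (fun _ => ∫ a, v a ∂μ)]
        simp

end Helpers

/-- One-state version: MSE decomposition for the empirical mean of `N` i.i.d. draws. -/
private lemma inner_mse {d : ℕ} {𝒜 : Type*} [MeasurableSpace 𝒜] (μ : Measure 𝒜)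
    [IsProbabilityMeasure μ] (h : 𝒜 → EuclideanSpace ℝ (Fin d)) (hmeas : Measurable h)
    (hL2 : MemLp h 2 μ) (g : EuclideanSpace ℝ (Fin d)) (N : ℕ) (hN : 1 ≤ N) :
    ∫ x : Fin N → 𝒜, ‖(1 / (N : ℝ)) • (∑ k : Fin N, h (x k)) - g‖ ^ 2 ∂(Measure.pi fun _ => μ)
      = ‖(∫ a, h a ∂μ) - g‖ ^ 2 + (1 / (N : ℝ)) * ∫ a, ‖h a - ∫ a', h a' ∂μ‖ ^ 2 ∂μ := by
  have hNR : (N : ℝ) ≠ 0 := Nat.cast_ne_zero.mpr (by omega)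
  set m : EuclideanSpace ℝ (Fin d) := ∫ a, h a ∂μ with hm
  set Y : 𝒜 → EuclideanSpace ℝ (Fin d) := fun a => h a - m with hYdef
  set c : EuclideanSpace ℝ (Fin d) := m - g with hc
  have hY2 : MemLp Y 2 μ := hL2.sub (memLp_const m)
  have hhint : Integrable h μ := hL2.integrable one_le_two
  have hYint : Integrable Y μ := hY2.integrable one_le_two
  have hYzero : ∫ a, Y a ∂μ = 0 := by
    rw [hYdef]
    rw [integral_sub hhint (integrable_const m)]
    simp [hm]
  set p : Fin d → 𝒜 → ℝ := fun i a => Y a i with hp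
  have hpint : ∀ i, Integrable (p i) μ := fun i =>
    (EuclideanSpace.proj (𝕜 := ℝ) i).integrable_comp hYint
  have hpzero : ∀ i, ∫ a, p i a ∂μ = 0 := fun i => by
    have := (EuclideanSpace.proj (𝕜 := ℝ) i).integral_comp_comm hYint
    simpa [hYzero] using this
  have hpmem : ∀ i, MemLp (p i) 2 μ := by
    intro i
    refine hY2.of_le ((hpint i).aestronglyMeasurable) ?_
    refine Filter.Eventually.of_forall fun a => ?_
    simpa [hp, Real.norm_eq_abs] using abs_coord_le (Y a) i
  have hp2 : ∀ i, Integrable (fun a => p i a * p i a) μ := by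
    intro i
    have := (memLp_two_iff_integrable_sq ((hpint i).aestronglyMeasurable)).mp (hpmem i)
    simpa [sq] using this
  set q : 𝒜 → ℝ := fun a => (innerSL ℝ c) (Y a) with hq
  have hqint : Integrable q μ := (innerSL ℝ c).integrable_comp hYint
  have hqzero : ∫ a, q a ∂μ = 0 := by
    have := (innerSL ℝ c).integral_comp_comm hYint
    simpa [hYzero, hq] using this
  have hYsq : Integrable (fun a => ‖Y a‖ ^ 2) μ :=
    (memLp_two_iff_integrable_sq_norm hY2.aestronglyMeasurable).mp hY2
  -- pointwise identity
  have key : ∀ x : Fin N → 𝒜,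
      ‖(1 / (N : ℝ)) • (∑ k : Fin N, h (x k)) - g‖ ^ 2
        = (1 / (N : ℝ)) ^ 2 * (∑ j : Fin N, ∑ k : Fin N, ∑ i : Fin d, p i (x j) * p i (x k))
          + ((2 / (N : ℝ)) * ∑ k : Fin N, q (x k) + ‖c‖ ^ 2) := by
    intro x
    have h1 : ∑ k : Fin N, h (x k) = (∑ k : Fin N, Y (x k)) + (N : ℝ) • m := by
      rw [hYdef]
      rw [Finset.sum_sub_distrib, Finset.sum_const, Finset.card_univ, Fintype.card_fin,
        Nat.cast_smul_eq_nsmul ℝ N m]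
      abel
    have h2 : (1 / (N : ℝ)) • ((N : ℝ) • m) = m := by
      rw [smul_smul, one_div, inv_mul_cancel₀ hNR, one_smul]
    have hsum : (1 / (N : ℝ)) • (∑ k : Fin N, h (x k)) - g
        = (1 / (N : ℝ)) • (∑ k : Fin N, Y (x k)) + c := by
      rw [h1, smul_add, h2, hc]
      abel
    rw [hsum, norm_add_sq_real]
    have e1 : ‖(1 / (N : ℝ)) • ∑ k : Fin N, Y (x k)‖ ^ 2
        = (1 / (N : ℝ)) ^ 2 * ∑ j : Fin N, ∑ k : Fin N, ∑ i : Fin d, p i (x j) * p i (x k) := by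
      rw [norm_smul, mul_pow, Real.norm_eq_abs, sq_abs]
      congr 1
      rw [← real_inner_self_eq_norm_sq, sum_inner]
      refine Finset.sum_congr rfl fun j _ => ?_
      rw [inner_sum]
      refine Finset.sum_congr rfl fun k _ => ?_
      simp [PiLp.inner_apply, RCLike.inner_apply, hp, mul_comm]
    have e2 : inner ℝ ((1 / (N : ℝ)) • ∑ k : Fin N, Y (x k)) c
        = (1 / (N : ℝ)) * ∑ k : Fin N, q (x k) := by
      rw [real_inner_smul_left, sum_inner]
      congr 1
      refine Finset.sum_congr rfl fun k _ => ?_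
      simp only [hq, innerSL_apply_apply]
      exact real_inner_comm _ _
    rw [e1, e2]
    ring
  rw [integral_congr_ae (Filter.Eventually.of_forall key)]
  -- integrability over the product
  have hterm : ∀ (j k : Fin N) (i : Fin d),
      Integrable (fun x : Fin N → 𝒜 => p i (x j) * p i (x k)) (Measure.pi fun _ => μ) := by
    intro j k i
    by_cases hjk : j = k
    · subst hjk
      exact aux_integrable_single (fun a => p i a * p i a) (hp2 i) j
    · exact aux_integrable_pair (hpint i) (hpint i) hjk
  have hT1 : Integrable
      (fun x : Fin N → 𝒜 => ∑ j : Fin N, ∑ k : Fin N, ∑ i : Fin d, p i (x j) * p i (x k))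
      (Measure.pi fun _ => μ) :=
    integrable_finset_sum _ fun j _ => integrable_finset_sum _ fun k _ =>
      integrable_finset_sum _ fun i _ => hterm j k i
  have hT2 : Integrable (fun x : Fin N → 𝒜 => ∑ k : Fin N, q (x k))
      (Measure.pi fun _ => μ) :=
    integrable_finset_sum _ fun k _ => aux_integrable_single q hqint k
  have hsum2 : Integrable
      (fun x : Fin N → 𝒜 => 2 / (N : ℝ) * ∑ k : Fin N, q (x k) + ‖c‖ ^ 2)
      (Measure.pi fun _ => μ) := by
    exact (hT2.const_mul _).add (integrable_const _)
  rw [integral_add (hT1.const_mul ((1 / (N : ℝ)) ^ 2)) hsum2,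
    integral_add (hT2.const_mul (2 / (N : ℝ))) (integrable_const (‖c‖ ^ 2)),
    integral_const_mul, integral_const_mul, integral_const]
  have hI2 : ∫ x : Fin N → 𝒜, ∑ k : Fin N, q (x k) ∂(Measure.pi fun _ => μ) = 0 := by
    rw [integral_finset_sum _ fun k _ => aux_integrable_single q hqint k]
    simp only [aux_integral_single q, hqzero]
    simp
  have hI1 : ∫ x : Fin N → 𝒜, ∑ j : Fin N, ∑ k : Fin N, ∑ i : Fin d, p i (x j) * p i (x k)
        ∂(Measure.pi fun _ => μ)
      = (N : ℝ) * ∫ a, ‖Y a‖ ^ 2 ∂μ := by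
    rw [integral_finset_sum _ fun j _ => integrable_finset_sum _ fun k _ =>
      integrable_finset_sum _ fun i _ => hterm j _ i]
    have hswap : ∀ j : Fin N,
        ∫ x : Fin N → 𝒜, ∑ k : Fin N, ∑ i : Fin d, p i (x j) * p i (x k)
            ∂(Measure.pi fun _ => μ)
          = ∑ k : Fin N, ∑ i : Fin d,
              ∫ x : Fin N → 𝒜, p i (x j) * p i (x k) ∂(Measure.pi fun _ => μ) := by
      intro j
      rw [integral_finset_sum _ fun k _ => integrable_finset_sum _ fun i _ => hterm j k i]
      exact Finset.sum_congr rfl fun k _ =>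
        integral_finset_sum _ fun i _ => hterm j k i
    have hval : ∀ j k : Fin N, ∀ i : Fin d,
        ∫ x : Fin N → 𝒜, p i (x j) * p i (x k) ∂(Measure.pi fun _ => μ)
          = if j = k then ∫ a, p i a * p i a ∂μ else 0 := by
      intro j k i
      by_cases hjk : j = k
      · subst hjk
        rw [if_pos rfl]
        exact aux_integral_single (fun a => p i a * p i a) j
      · rw [if_neg hjk, aux_integral_pair (p i) (p i) hjk, hpzero i, mul_zero]
    have hV : ∑ i : Fin d, ∫ a, p i a * p i a ∂μ = ∫ a, ‖Y a‖ ^ 2 ∂μ := by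
      rw [← integral_finset_sum _ fun i _ => hp2 i]
      refine integral_congr_ae (Filter.Eventually.of_forall fun a => ?_)
      show ∑ i, p i a * p i a = ‖Y a‖ ^ 2
      rw [← real_inner_self_eq_norm_sq, PiLp.inner_apply]
      simp [RCLike.inner_apply, hp, sq]
    calc ∑ j : Fin N, ∫ x : Fin N → 𝒜,
            ∑ k : Fin N, ∑ i : Fin d, p i (x j) * p i (x k) ∂(Measure.pi fun _ => μ)
        = ∑ j : Fin N, ∑ k : Fin N, ∑ i : Fin d,
            ∫ x : Fin N → 𝒜, p i (x j) * p i (x k) ∂(Measure.pi fun _ => μ) :=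
          Finset.sum_congr rfl fun j _ => hswap j
      _ = ∑ j : Fin N, ∑ k : Fin N,
            (if j = k then ∫ a, ‖Y a‖ ^ 2 ∂μ else 0) := by
          refine Finset.sum_congr rfl fun j _ => Finset.sum_congr rfl fun k _ => ?_
          rw [Finset.sum_congr rfl fun i _ => hval j k i]
          by_cases hjk : j = k
          · simp only [if_pos hjk]
            exact hV
          · simp [hjk]
      _ = ∑ j : Fin N, ∫ a, ‖Y a‖ ^ 2 ∂μ := by
          refine Finset.sum_congr rfl fun j _ => ?_
          rw [Finset.sum_ite_eq Finset.univ j (fun _ => ∫ a, ‖Y a‖ ^ 2 ∂μ)]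
          simp
      _ = (N : ℝ) * ∫ a, ‖Y a‖ ^ 2 ∂μ := by
          rw [Finset.sum_const, Finset.card_univ, Fintype.card_fin, nsmul_eq_mul]
  rw [hI1, hI2]
  have : ∫ a, ‖h a - m‖ ^ 2 ∂μ = ∫ a, ‖Y a‖ ^ 2 ∂μ := by
    refine integral_congr_ae (Filter.Eventually.of_forall fun a => ?_)
    rw [hYdef]
  rw [probReal_univ]
  simp only [ENNReal.toReal_one, smul_eq_mul, one_mul, mul_zero]
  rw [this]
  field_simp
  ring

/-- **Two-stage MSE decomposition of the all-action Monte Carlo estimator.**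
Draw a state `s ~ ν` and then `N` actions i.i.d. from the kernel `κ s`.
For square-integrable `f : S × 𝒜 → ℝ^d` with conditional mean
`F s = ∫ f (s, a) ∂(κ s)` and any fixed `g`,
`E[‖(1/N) ∑ₖ f (s, aₖ) − g‖²]
  = ∫ ‖F s − g‖² dν + (1/N) ∫∫ ‖f (s,a) − F s‖² d(κ s) dν`. -/
theorem all_action_mse_decomposition
    {d : ℕ} {S 𝒜 : Type*} [MeasurableSpace S] [MeasurableSpace 𝒜]
    (ν : Measure S) [IsProbabilityMeasure ν]
    (κ : Kernel S 𝒜) [IsMarkovKernel κ]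
    (f : S × 𝒜 → EuclideanSpace ℝ (Fin d)) (hfm : Measurable f)
    (hf : MemLp f 2 (ν ⊗ₘ κ))
    (g : EuclideanSpace ℝ (Fin d)) (N : ℕ) (hN : 1 ≤ N) :
    ∫ s, ∫ a, ‖(1 / (N : ℝ)) • (∑ k : Fin N, f (s, a k)) - g‖ ^ 2
        ∂(Measure.pi fun _ : Fin N => κ s) ∂ν =
      (∫ s, ‖(∫ a, f (s, a) ∂(κ s)) - g‖ ^ 2 ∂ν)
        + (1 / (N : ℝ)) *
            ∫ s, ∫ a, ‖f (s, a) - ∫ a', f (s, a') ∂(κ s)‖ ^ 2 ∂(κ s) ∂ν := by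
  have hFsm : StronglyMeasurable (fun s => ∫ a, f (s, a) ∂(κ s)) :=
    hfm.stronglyMeasurable.integral_kernel_prod_right'
  have hf2 : Integrable (fun x => ‖f x‖ ^ 2) (ν ⊗ₘ κ) :=
    (memLp_two_iff_integrable_sq_norm hf.aestronglyMeasurable).mp hf
  have hf2' := (Measure.integrable_compProd_iff
    (hfm.norm.pow_const 2).aestronglyMeasurable).mp hf2
  obtain ⟨hae, hint⟩ := hf2'
  have hint' : Integrable (fun s => ∫ a, ‖f (s, a)‖ ^ 2 ∂(κ s)) ν := by
    simpa only [norm_pow, norm_norm] using hint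
  have haemem : ∀ᵐ s ∂ν, MemLp (fun a => f (s, a)) 2 (κ s) := by
    filter_upwards [hae] with s hs
    exact (memLp_two_iff_integrable_sq_norm
      ((hfm.comp measurable_prodMk_left).aestronglyMeasurable)).mpr hs
  -- pointwise variance bound for the conditional mean
  have hFbound : ∀ᵐ s ∂ν,
      ‖∫ a, f (s, a) ∂(κ s)‖ ^ 2 ≤ ∫ a, ‖f (s, a)‖ ^ 2 ∂(κ s) := by
    filter_upwards [haemem] with s hs
    have h1 : ‖∫ a, f (s, a) ∂(κ s)‖ ≤ ∫ a, ‖f (s, a)‖ ∂(κ s) :=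
      norm_integral_le_integral_norm _
    have hX : MemLp (fun a => ‖f (s, a)‖) 2 (κ s) := hs.norm
    have h2 := variance_nonneg (fun a => ‖f (s, a)‖) (κ s)
    rw [variance_eq_sub hX] at h2
    have h3 : (∫ a, ‖f (s, a)‖ ∂(κ s)) ^ 2 ≤ ∫ a, ‖f (s, a)‖ ^ 2 ∂(κ s) := by
      have : (κ s)[(fun a => ‖f (s, a)‖) ^ 2] = ∫ a, ‖f (s, a)‖ ^ 2 ∂(κ s) := by
        refine integral_congr_ae (Filter.Eventually.of_forall fun a => ?_)
        simp [sq]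
      linarith [h2, this ▸ h2]
    nlinarith [norm_nonneg (∫ a, f (s, a) ∂(κ s)), integral_nonneg
      (μ := κ s) (f := fun a => ‖f (s, a)‖) (fun a => norm_nonneg (f (s, a)))]
  -- integrability of the two summands
  have hA : Integrable (fun s => ‖(∫ a, f (s, a) ∂(κ s)) - g‖ ^ 2) ν := by
    refine Integrable.mono' ((hint'.const_mul 2).add (integrable_const (2 * ‖g‖ ^ 2)))
      (((hFsm.sub stronglyMeasurable_const).norm.pow _).aestronglyMeasurable) ?_
    filter_upwards [hFbound] with s hs
    have h0 : ‖(∫ a, f (s, a) ∂(κ s)) - g‖ ≤ ‖∫ a, f (s, a) ∂(κ s)‖ + ‖g‖ := norm_sub_le _ _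
    have h1 : ‖(∫ a, f (s, a) ∂(κ s)) - g‖ ^ 2
        ≤ 2 * ‖∫ a, f (s, a) ∂(κ s)‖ ^ 2 + 2 * ‖g‖ ^ 2 := by
      have h0' : ‖(∫ a, f (s, a) ∂(κ s)) - g‖ ^ 2
          ≤ (‖∫ a, f (s, a) ∂(κ s)‖ + ‖g‖) ^ 2 :=
        pow_le_pow_left₀ (norm_nonneg _) h0 2
      nlinarith [sq_nonneg (‖∫ a, f (s, a) ∂(κ s)‖ - ‖g‖)]
    simp only [Pi.add_apply]
    rw [Real.norm_eq_abs, abs_of_nonneg (by positivity)]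
    nlinarith
  have hBsm : StronglyMeasurable
      (fun s => ∫ a, ‖f (s, a) - ∫ a', f (s, a') ∂(κ s)‖ ^ 2 ∂(κ s)) := by
    have : StronglyMeasurable (fun x : S × 𝒜 => ‖f x - ∫ a', f (x.1, a') ∂(κ x.1)‖ ^ 2) :=
      ((hfm.stronglyMeasurable.sub (hFsm.comp_measurable measurable_fst)).norm.pow _)
    exact this.integral_kernel_prod_right'
  have hB : Integrable (fun s => ∫ a, ‖f (s, a) - ∫ a', f (s, a') ∂(κ s)‖ ^ 2 ∂(κ s)) ν := by
    refine Integrable.mono' (hint'.const_mul 4) hBsm.aestronglyMeasurable ?_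
    filter_upwards [hae, hFbound] with s hs hFs
    have hnn : 0 ≤ ∫ a, ‖f (s, a) - ∫ a', f (s, a') ∂(κ s)‖ ^ 2 ∂(κ s) :=
      integral_nonneg fun a => by positivity
    rw [Real.norm_eq_abs, abs_of_nonneg hnn]
    have hmono : ∫ a, ‖f (s, a) - ∫ a', f (s, a') ∂(κ s)‖ ^ 2 ∂(κ s)
        ≤ ∫ a, (2 * ‖f (s, a)‖ ^ 2 + 2 * ‖∫ a', f (s, a') ∂(κ s)‖ ^ 2) ∂(κ s) := by
      refine integral_mono_of_nonneg (Filter.Eventually.of_forall fun a => by positivity)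
        ((hs.const_mul 2).add (integrable_const _)) ?_
      refine Filter.Eventually.of_forall fun a => ?_
      have h0' : ‖f (s, a) - ∫ a', f (s, a') ∂(κ s)‖ ^ 2
          ≤ (‖f (s, a)‖ + ‖∫ a', f (s, a') ∂(κ s)‖) ^ 2 :=
        pow_le_pow_left₀ (norm_nonneg _) (norm_sub_le _ _) 2
      beta_reduce
      nlinarith [sq_nonneg (‖f (s, a)‖ - ‖∫ a', f (s, a') ∂(κ s)‖)]
    have hval : ∫ a, (2 * ‖f (s, a)‖ ^ 2 + 2 * ‖∫ a', f (s, a') ∂(κ s)‖ ^ 2) ∂(κ s)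
        = 2 * (∫ a, ‖f (s, a)‖ ^ 2 ∂(κ s)) + 2 * ‖∫ a', f (s, a') ∂(κ s)‖ ^ 2 := by
      rw [integral_add (hs.const_mul 2) (integrable_const _), integral_const_mul,
        integral_const, probReal_univ]
      simp
    calc ∫ a, ‖f (s, a) - ∫ a', f (s, a') ∂(κ s)‖ ^ 2 ∂(κ s)
        ≤ 2 * (∫ a, ‖f (s, a)‖ ^ 2 ∂(κ s)) + 2 * ‖∫ a', f (s, a') ∂(κ s)‖ ^ 2 :=
          hval ▸ hmono
      _ ≤ 4 * ∫ a, ‖f (s, a)‖ ^ 2 ∂(κ s) := by nlinarith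
  -- a.e. pointwise identity from the one-state lemma
  have hkey : ∀ᵐ s ∂ν,
      ∫ a, ‖(1 / (N : ℝ)) • (∑ k : Fin N, f (s, a k)) - g‖ ^ 2
          ∂(Measure.pi fun _ : Fin N => κ s)
        = ‖(∫ a, f (s, a) ∂(κ s)) - g‖ ^ 2
            + (1 / (N : ℝ)) * ∫ a, ‖f (s, a) - ∫ a', f (s, a') ∂(κ s)‖ ^ 2 ∂(κ s) := by
    filter_upwards [haemem] with s hs
    exact inner_mse (κ s) (fun a => f (s, a)) (hfm.comp measurable_prodMk_left) hs g N hN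
  rw [integral_congr_ae hkey, integral_add hA (hB.const_mul _), integral_const_mul]
end

section
/- Let (Ω, F, P) be a probability space and m ⊆ F a sub-σ-algebra. Let u : Ω → ℝ^d be m-measurable with ‖u(ω)‖² ≤ M almost surely, A : Ω → ℝ m-measurable and square-integrable, and X : Ω → ℝ square-integrable with E[X | m] = A almost surely and E[(X − A)²] ≤ ξ. Define g = E[u A] and L = E[‖u A − g‖²]. Then the mean squared error of the estimator u X against g satisfies E[ ‖u X − g‖² ] ≤ L + M ξ. -/
open MeasureTheory ProbabilityTheory

/-- Product of two L² real functions is integrable (via AM-GM). -/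
lemma integrable_mul_of_memL2 {Ω : Type*} {F : MeasurableSpace Ω} {P : Measure Ω}
    {f h : Ω → ℝ} (hf : MemLp f 2 P) (hh : MemLp h 2 P) :
    Integrable (fun ω => f ω * h ω) P := by
  have hint : Integrable (fun ω => (f ω ^ 2 + h ω ^ 2) / 2) P :=
    ((hf.integrable_sq.add hh.integrable_sq).div_const 2)
  refine hint.mono (hf.aestronglyMeasurable.mul hh.aestronglyMeasurable) ?_
  filter_upwards with ω
  have h1 : |f ω * h ω| ≤ (f ω ^ 2 + h ω ^ 2) / 2 := by
    rw [abs_mul]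
    nlinarith [sq_nonneg (|f ω| - |h ω|), sq_abs (f ω), sq_abs (h ω), abs_nonneg (f ω), abs_nonneg (h ω)]
  have h2 : (0:ℝ) ≤ (f ω ^ 2 + h ω ^ 2) / 2 := by positivity
  rw [Real.norm_eq_abs, Real.norm_eq_abs, abs_of_nonneg h2]
  exact h1

/-- **MSE bound for the REINFORCE (likelihood ratio) estimator**
(paper's Theorem 2). With score `u` that is `m`-measurable and bounded by
`‖u‖² ≤ M` a.s., true advantage `A` (`m`-measurable), rollout return `X`
satisfying `E[X | m] = A` a.s. with rollout noise `E[(X − A)²] ≤ ξ`, true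
gradient `g = E[u A]`, and exact-advantage MSE `L = E[‖u A − g‖²]`, the MSE of
the estimator `u X` against `g` satisfies `E[‖u X − g‖²] ≤ L + M ξ`. -/
theorem reinforce_mse_bound
    {d : ℕ} {Ω : Type*} {F : MeasurableSpace Ω} (P : Measure Ω)
    [IsProbabilityMeasure P]
    (m : MeasurableSpace Ω) (hm : m ≤ F)
    (u : Ω → EuclideanSpace ℝ (Fin d)) (hum : Measurable[m] u)
    (M : ℝ) (hM : 0 ≤ M) (hubound : ∀ᵐ ω ∂P, ‖u ω‖ ^ 2 ≤ M)
    (A : Ω → ℝ) (hAm : Measurable[m] A) (hA : MemLp A 2 P)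
    (X : Ω → ℝ) (hX : MemLp X 2 P)
    (hcond : P[X | m] =ᵐ[P] A)
    (ξ : ℝ) (hξ : ∫ ω, (X ω - A ω) ^ 2 ∂P ≤ ξ)
    (g : EuclideanSpace ℝ (Fin d)) (hg : g = ∫ ω, A ω • u ω ∂P)
    (L : ℝ) (hL : L = ∫ ω, ‖A ω • u ω - g‖ ^ 2 ∂P) :
    ∫ ω, ‖X ω • u ω - g‖ ^ 2 ∂P ≤ L + M * ξ := by
  classical
  -- measurability of u w.r.t. F
  have huF : Measurable[F] u := hum.mono hm le_rfl
  have hAF : Measurable[F] A := hAm.mono hm le_rfl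
  -- the noise Y = X - A
  set Y : Ω → ℝ := fun ω => X ω - A ω with hYdef
  have hY : MemLp Y 2 P := hX.sub hA
  -- the a.e. bound on ‖u‖
  have hub' : ∀ᵐ ω ∂P, ‖u ω‖ ≤ Real.sqrt M := by
    filter_upwards [hubound] with ω h
    have := Real.sqrt_le_sqrt h
    rwa [Real.sqrt_sq (norm_nonneg _)] at this
  -- A • u ∈ L²
  have hAu : MemLp (fun ω => A ω • u ω) 2 P := by
    refine MemLp.of_le (hA.const_mul (Real.sqrt M))
      ((hAF.aestronglyMeasurable).smul huF.aestronglyMeasurable) ?_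
    filter_upwards [hub'] with ω h
    have : ‖A ω • u ω‖ = |A ω| * ‖u ω‖ := by
      rw [norm_smul, Real.norm_eq_abs]
    rw [this, Real.norm_eq_abs, abs_mul, abs_of_nonneg (Real.sqrt_nonneg M), mul_comm]
    exact mul_le_mul_of_nonneg_right h (abs_nonneg _)
  have ha : MemLp (fun ω => A ω • u ω - g) 2 P := hAu.sub (memLp_const g)
  -- the m-measurable function h = ⟪A•u - g, u⟫
  set h : Ω → ℝ := fun ω => inner ℝ (A ω • u ω - g) (u ω) with hhdef
  have hhm : Measurable[m] h := by
    exact Measurable.inner ((hAm.smul hum).sub measurable_const) hum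
  have hhF : Measurable[F] h := hhm.mono hm le_rfl
  -- h ∈ L²
  have hh2 : MemLp h 2 P := by
    refine MemLp.of_le ((ha.norm).const_mul (Real.sqrt M)) hhF.aestronglyMeasurable ?_
    filter_upwards [hub'] with ω hb
    have h1 : |h ω| ≤ ‖A ω • u ω - g‖ * ‖u ω‖ := by
      simpa [Real.norm_eq_abs] using norm_inner_le_norm (𝕜 := ℝ) (A ω • u ω - g) (u ω)
    rw [Real.norm_eq_abs, Real.norm_eq_abs, abs_mul, abs_of_nonneg (Real.sqrt_nonneg M),
      abs_of_nonneg (norm_nonneg _), mul_comm]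
    calc |h ω| ≤ ‖A ω • u ω - g‖ * ‖u ω‖ := h1
      _ ≤ ‖A ω • u ω - g‖ * Real.sqrt M :=
        mul_le_mul_of_nonneg_left hb (norm_nonneg _)
  -- E[Y | m] = 0
  have hcondY : P[Y | m] =ᵐ[P] 0 := by
    have h1 : P[Y | m] =ᵐ[P] P[X | m] - P[A | m] :=
      condExp_sub (hX.integrable one_le_two) (hA.integrable one_le_two) m
    have h2 : P[A | m] = A :=
      condExp_of_stronglyMeasurable hm hAm.stronglyMeasurable (hA.integrable one_le_two)
    filter_upwards [h1, hcond] with ω h1ω hcω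
    simp [h1ω, h2, hcω]
  -- cross term is zero
  have hhY_int : Integrable (fun ω => h ω * Y ω) P := integrable_mul_of_memL2 hh2 hY
  have hcross : ∫ ω, h ω * Y ω ∂P = 0 := by
    have hpull : P[h * Y | m] =ᵐ[P] h * P[Y | m] :=
      condExp_mul_of_stronglyMeasurable_left hhm.stronglyMeasurable hhY_int (hY.integrable one_le_two)
    have hzero : P[h * Y | m] =ᵐ[P] 0 := by
      filter_upwards [hpull, hcondY] with ω h1 h2
      simp [h1, Pi.mul_apply, h2]
    have hint : ∫ ω, (P[h * Y | m]) ω ∂P = ∫ ω, h ω * Y ω ∂P :=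
      integral_condExp hm
    rw [← hint, integral_congr_ae hzero]
    simp
  -- integrability of the pieces
  have hnorm_a_int : Integrable (fun ω => ‖A ω • u ω - g‖ ^ 2) P := by
    have := (memLp_two_iff_integrable_sq_norm ha.aestronglyMeasurable).mp ha
    exact this
  have hY2int : Integrable (fun ω => Y ω ^ 2) P := hY.integrable_sq
  have hY2u_int : Integrable (fun ω => Y ω ^ 2 * ‖u ω‖ ^ 2) P := by
    have hu2ae : AEStronglyMeasurable[F] (fun ω => ‖u ω‖ ^ 2) P :=
      (continuous_pow 2).comp_aestronglyMeasurable huF.aestronglyMeasurable.norm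
    have hY2ae : AEStronglyMeasurable[F] (fun ω => Y ω ^ 2) P :=
      (continuous_pow 2).comp_aestronglyMeasurable hY.aestronglyMeasurable
    refine (hY2int.const_mul M).mono (hY2ae.mul hu2ae) ?_
    filter_upwards [hubound] with ω hb
    have h0 : (0:ℝ) ≤ Y ω ^ 2 := sq_nonneg _
    rw [Real.norm_eq_abs, Real.norm_eq_abs, abs_of_nonneg (by positivity),
      abs_of_nonneg (by positivity : (0:ℝ) ≤ M * Y ω ^ 2), mul_comm M]
    exact mul_le_mul_of_nonneg_left hb h0
  -- pointwise decomposition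
  have hdecomp : ∀ ω, ‖X ω • u ω - g‖ ^ 2
      = ‖A ω • u ω - g‖ ^ 2 + 2 * (h ω * Y ω) + Y ω ^ 2 * ‖u ω‖ ^ 2 := by
    intro ω
    have hsplit : X ω • u ω - g = (A ω • u ω - g) + Y ω • u ω := by
      simp only [hYdef, sub_smul]
      abel
    rw [hsplit, norm_add_sq_real]
    congr 1
    · congr 1
      rw [real_inner_smul_right]
      ring
    · rw [norm_smul, mul_pow, Real.norm_eq_abs, sq_abs]
  -- integrate
  have hint_eq : ∫ ω, ‖X ω • u ω - g‖ ^ 2 ∂P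
      = (∫ ω, ‖A ω • u ω - g‖ ^ 2 ∂P) + 2 * (∫ ω, h ω * Y ω ∂P)
        + ∫ ω, Y ω ^ 2 * ‖u ω‖ ^ 2 ∂P := by
    have hc2 : Integrable (fun ω => 2 * (h ω * Y ω)) P := hhY_int.const_mul 2
    have hsum1 : Integrable (fun ω => ‖A ω • u ω - g‖ ^ 2 + 2 * (h ω * Y ω)) P :=
      hnorm_a_int.add hc2
    calc ∫ ω, ‖X ω • u ω - g‖ ^ 2 ∂P
        = ∫ ω, (‖A ω • u ω - g‖ ^ 2 + 2 * (h ω * Y ω) + Y ω ^ 2 * ‖u ω‖ ^ 2) ∂P :=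
          integral_congr_ae (Filter.Eventually.of_forall hdecomp)
      _ = (∫ ω, ‖A ω • u ω - g‖ ^ 2 ∂P) + 2 * (∫ ω, h ω * Y ω ∂P)
            + ∫ ω, Y ω ^ 2 * ‖u ω‖ ^ 2 ∂P := by
          rw [integral_add hsum1 hY2u_int, integral_add hnorm_a_int hc2,
            integral_const_mul]
  have hlast : ∫ ω, Y ω ^ 2 * ‖u ω‖ ^ 2 ∂P ≤ M * ξ := by
    have h1 : ∫ ω, Y ω ^ 2 * ‖u ω‖ ^ 2 ∂P ≤ ∫ ω, M * Y ω ^ 2 ∂P := by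
      refine integral_mono_ae hY2u_int (hY2int.const_mul M) ?_
      filter_upwards [hubound] with ω hb
      rw [mul_comm M]
      exact mul_le_mul_of_nonneg_left hb (sq_nonneg _)
    have h2 : ∫ ω, M * Y ω ^ 2 ∂P = M * ∫ ω, Y ω ^ 2 ∂P := integral_const_mul M _
    have h3 : M * ∫ ω, Y ω ^ 2 ∂P ≤ M * ξ := mul_le_mul_of_nonneg_left hξ hM
    linarith
  rw [hint_eq, hcross, hL]
  linarith
end
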